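/- Let L be a finite collection of subsets of [r] closed under unions and intersections containing ∅ and [r]. For each i ∈ [r], let T_i be the union of all members of L not containing i. Then each T_i lies in L, is meet-irreducible in L, and every meet-irreducible element of L equals T_i for some i. -/

import Mathlib

/-- In a sublattice `L` of the powerset of `Fin r` containing `∅` and `univ`,
the sets `T i` (greatest member of `L` not containing `i`) lie in `L`, are
meet-irreducible, and every meet-irreducible element of `L` is one of them. -/
theorem stmt_3 {r : ℕ} (L : Set (Set (Fin r)))
    (hunion : ∀ X ∈ L, ∀ Y ∈ L, X ∪ Y ∈ L)
    (hinter : ∀ X ∈ L, ∀ Y ∈ L, X ∩ Y ∈ L)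
    (hbot : ∅ ∈ L) (htop : Set.univ ∈ L)
    (T : Fin r → Set (Fin r))
    (hT : ∀ i, T i = ⋃₀ {J | J ∈ L ∧ i ∉ J}) :
    (∀ i, T i ∈ L) ∧
    (∀ i, T i ≠ Set.univ ∧
      ∀ B ∈ L, ∀ C ∈ L, T i = B ∩ C → T i = B ∨ T i = C) ∧
    (∀ a ∈ L, (a ≠ Set.univ ∧ ∀ B ∈ L, ∀ C ∈ L, a = B ∩ C → a = B ∨ a = C) →
      ∃ i, a = T i) := by
  classical
  -- finite sUnion closure
  have hsU : ∀ S : Set (Set (Fin r)), S ⊆ L → ⋃₀ S ∈ L := by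
    intro S
    refine Set.Finite.induction_on (motive := fun S _ => S ⊆ L → ⋃₀ S ∈ L) S (Set.toFinite S) (fun _ => by simpa using hbot) ?_
    intro x s _ _ ih h
    rw [Set.sUnion_insert]
    exact hunion _ (h (Set.mem_insert _ _)) _
      (ih fun y hy => h (Set.mem_insert_of_mem _ hy))
  have hTL : ∀ i, T i ∈ L := by
    intro i; rw [hT]; exact hsU _ fun J hJ => hJ.1
  have hiT : ∀ i, i ∉ T i := by
    intro i hi
    rw [hT] at hi
    rcases hi with ⟨J, ⟨_, hiJ⟩, hiJ'⟩
    exact hiJ hiJ'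
  have hsub : ∀ i, ∀ B ∈ L, i ∉ B → B ⊆ T i := by
    intro i B hB hiB
    rw [hT]
    exact Set.subset_sUnion_of_mem ⟨hB, hiB⟩
  refine ⟨hTL, fun i => ⟨?_, ?_⟩, ?_⟩
  · intro h
    exact hiT i (h ▸ Set.mem_univ i)
  · intro B hB C hC heq
    by_contra hcon
    push_neg at hcon
    have hiB : i ∈ B := by
      by_contra hiB
      exact hcon.1 (Set.Subset.antisymm (heq ▸ Set.inter_subset_left)
        (hsub i B hB hiB))
    have hiC : i ∈ C := by
      by_contra hiC
      exact hcon.2 (Set.Subset.antisymm (heq ▸ Set.inter_subset_right)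
        (hsub i C hC hiC))
    exact hiT i (heq ▸ ⟨hiB, hiC⟩)
  · rintro a haL ⟨hane, hirr⟩
    have hinterF : ∀ s : Finset (Fin r), (⋂ i ∈ s, T i) ∈ L := by
      intro s
      induction s using Finset.induction with
      | empty => simpa using htop
      | @insert j t hj ih =>
        rw [Finset.set_biInter_insert]
        exact hinter _ (hTL j) _ ih
    have key : ∀ s : Finset (Fin r), s.Nonempty → a = ⋂ i ∈ s, T i → ∃ i, a = T i := by
      intro s
      induction s using Finset.induction with
      | empty => rintro ⟨x, hx⟩; simp at hx
      | @insert j t hj ih =>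
        intro _ heq
        rcases t.eq_empty_or_nonempty with rfl | ht
        · simp at heq; exact ⟨j, heq⟩
        · rw [Finset.set_biInter_insert] at heq
          rcases hirr _ (hTL j) _ (hinterF t) heq with h | h
          · exact ⟨j, h⟩
          · exact ih ht h
    obtain ⟨i0, hi0⟩ : ∃ i, i ∉ a := by
      by_contra h
      push_neg at h
      exact hane (Set.eq_univ_of_forall h)
    set s : Finset (Fin r) := Finset.univ.filter (· ∉ a) with hs
    have hsne : s.Nonempty := ⟨i0, by simp [hs, hi0]⟩
    have heq : a = ⋂ i ∈ s, T i := by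
      apply Set.Subset.antisymm
      · exact Set.subset_iInter₂ fun i hi =>
          hsub i a haL (by simpa [hs] using hi)
      · intro x hx
        by_contra hxa
        have : x ∈ T x := Set.mem_iInter₂.mp hx x (by simp [hs, hxa])
        exact hiT x this
    exact key s hsne heq
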